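/- arXiv:1609.06306 — 3 statements merged into one kernel-verified Lean document; each statement's English description precedes it below -/
import Mathlib

section
/- Let T, T', S be Hermitian unitary operators on a Hilbert space and let σ be a unit vector. If ⟨σ|T·S|σ⟩ ≥ 1 - δ and ⟨σ|T'·S|σ⟩ ≥ 1 - δ, then ⟨σ|T·T'|σ⟩ ≥ 1 - 4δ. -/
lemma aux_adj {H : Type*} [NormedAddCommGroup H] [InnerProductSpace ℂ H]
    [CompleteSpace H] {A : H →L[ℂ] H} (hA : IsSelfAdjoint A) (x y : H) :
    (inner ℂ (A x) y : ℂ) = inner ℂ x (A y) := by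
  rw [← ContinuousLinearMap.adjoint_inner_left,
    (ContinuousLinearMap.isSelfAdjoint_iff' ).mp hA]

lemma aux_norm {H : Type*} [NormedAddCommGroup H] [InnerProductSpace ℂ H]
    [CompleteSpace H] {A : H →L[ℂ] H} (hA : IsSelfAdjoint A) (hAu : A * A = 1)
    (σ : H) (hσ : ‖σ‖ = 1) : ‖A σ‖ = 1 := by
  have h : (‖A σ‖ : ℝ)^2 = 1 := by
    have := aux_adj hA σ (A σ)
    have h2 : (inner ℂ (A σ) (A σ) : ℂ) = inner ℂ σ σ := by
      rw [this]
      have : A (A σ) = σ := by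
        have := congrArg (fun B => B σ) hAu
        simpa [ContinuousLinearMap.mul_apply] using this
      rw [this]
    have := congrArg Complex.re h2
    rw [← RCLike.re_to_complex, ← RCLike.re_to_complex,
      inner_self_eq_norm_sq (𝕜 := ℂ), inner_self_eq_norm_sq (𝕜 := ℂ), hσ] at this
    simpa using this
  nlinarith [norm_nonneg (A σ)]

/-- Let `T, T', S` be Hermitian unitary operators on a Hilbert space and let
`σ` be a unit vector. If `⟨σ|T·S|σ⟩ ≥ 1 - δ` and `⟨σ|T'·S|σ⟩ ≥ 1 - δ`, then
`⟨σ|T·T'|σ⟩ ≥ 1 - 4δ` (real parts of the inner products). -/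
theorem stmt_0 {H : Type*} [NormedAddCommGroup H] [InnerProductSpace ℂ H]
    [CompleteSpace H]
    (T T' S : H →L[ℂ] H)
    (hT : IsSelfAdjoint T) (hT' : IsSelfAdjoint T') (hS : IsSelfAdjoint S)
    (hTu : T * T = 1) (hT'u : T' * T' = 1) (hSu : S * S = 1)
    (σ : H) (hσ : ‖σ‖ = 1) (δ : ℝ) (hδ : 0 ≤ δ)
    (h1 : 1 - δ ≤ (inner ℂ σ ((T * S) σ) : ℂ).re)
    (h2 : 1 - δ ≤ (inner ℂ σ ((T' * S) σ) : ℂ).re) :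
    1 - 4 * δ ≤ (inner ℂ σ ((T * T') σ) : ℂ).re := by
  have hnT := aux_norm hT hTu σ hσ
  have hnT' := aux_norm hT' hT'u σ hσ
  have hnS := aux_norm hS hSu σ hσ
  have key : ∀ x y : H, ‖x‖ = 1 → ‖y‖ = 1 →
      ‖x - y‖^2 = 2 - 2 * (inner ℂ x y : ℂ).re := by
    intro x y hx hy
    rw [@norm_sub_sq ℂ, hx, hy]; simp [RCLike.re_to_complex]; ring
  have e1 : (inner ℂ σ ((T * S) σ) : ℂ).re = (inner ℂ (T σ) (S σ) : ℂ).re := by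
    rw [aux_adj hT σ (S σ)]; rfl
  have e2 : (inner ℂ σ ((T' * S) σ) : ℂ).re = (inner ℂ (T' σ) (S σ) : ℂ).re := by
    rw [aux_adj hT' σ (S σ)]; rfl
  have e3 : (inner ℂ σ ((T * T') σ) : ℂ).re = (inner ℂ (T σ) (T' σ) : ℂ).re := by
    rw [aux_adj hT σ (T' σ)]; rfl
  have k1 := key (T σ) (S σ) hnT hnS
  have k2 := key (T' σ) (S σ) hnT' hnS
  have k3 := key (T σ) (T' σ) hnT hnT'
  have b1 : ‖T σ - S σ‖^2 ≤ 2 * δ := by rw [k1]; rw [e1] at h1; linarith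
  have b2 : ‖T' σ - S σ‖^2 ≤ 2 * δ := by rw [k2]; rw [e2] at h2; linarith
  have tri : ‖T σ - T' σ‖ ≤ ‖T σ - S σ‖ + ‖T' σ - S σ‖ := by
    have := norm_sub_le_norm_sub_add_norm_sub (T σ) (S σ) (T' σ)
    calc ‖T σ - T' σ‖ ≤ ‖T σ - S σ‖ + ‖S σ - T' σ‖ := this
      _ = ‖T σ - S σ‖ + ‖T' σ - S σ‖ := by rw [norm_sub_rev (S σ)]
  have b3 : ‖T σ - T' σ‖^2 ≤ 8 * δ := by
    have h4 := mul_self_le_mul_self (norm_nonneg (T σ - T' σ)) tri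
    nlinarith [sq_nonneg (‖T σ - S σ‖ - ‖T' σ - S σ‖), norm_nonneg (T σ - S σ),
      norm_nonneg (T' σ - S σ)]
  rw [e3]; linarith [k3, b3]
end

section
/- Let M₁ be the 4-qubit operator of the previous statement and define the 4n-qubit operator M_n := M₁^{⊗n}. If a density matrix ρ on (ℂ²)^{⊗4n} satisfies Tr[M_n ρ] ≥ 1 - δ, then ⟨EPR|^{⊗2n} ρ |EPR⟩^{⊗2n} ≥ 1 - (9/4)δ. -/
open Matrix
open scoped BigOperators ComplexOrder

noncomputable section

/-- Pauli X on ℂ², indexed by `ZMod 2`. -/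
def pX : Matrix (ZMod 2) (ZMod 2) ℂ := fun i j => if i = j then 0 else 1

/-- Pauli Z on ℂ², indexed by `ZMod 2`. -/
def pZ : Matrix (ZMod 2) (ZMod 2) ℂ := fun i j => if i = j then (if i = 0 then 1 else -1) else 0

/-- Pauli Y on ℂ², indexed by `ZMod 2`. -/
def pY : Matrix (ZMod 2) (ZMod 2) ℂ :=
  fun i j => if i = 0 ∧ j = 1 then -Complex.I else if i = 1 ∧ j = 0 then Complex.I else 0

/-- Index set for four qubits. -/
abbrev Q4 := ZMod 2 × ZMod 2 × ZMod 2 × ZMod 2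

/-- Tensor product `A ⊗ B ⊗ C ⊗ D` of four single-qubit operators. -/
def word4 (A B C D : Matrix (ZMod 2) (ZMod 2) ℂ) : Matrix Q4 Q4 ℂ :=
  fun p q => A p.1 q.1 * B p.2.1 q.2.1 * C p.2.2.1 q.2.2.1 * D p.2.2.2 q.2.2.2

/-- The 4-qubit operator `M₁`. -/
def M1 : Matrix Q4 Q4 ℂ :=
  (1 / 2 : ℂ) • (1 : Matrix Q4 Q4 ℂ) +
    (1 / 18 : ℂ) •
      (word4 1 pX 1 pX + word4 pX 1 pX 1 + word4 pX pX pX pX +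
        word4 pZ 1 pZ 1 + word4 1 pZ 1 pZ + word4 pZ pZ pZ pZ +
        word4 pX pZ pX pZ + word4 pZ pX pZ pX + word4 pY pY pY pY)

/-- The `4n`-qubit operator `M_n := M₁^{⊗n}` (tensor power, with the `4n` qubits grouped into
`n` blocks of `4`). -/
def Mn (n : ℕ) : Matrix (Fin n → Q4) (Fin n → Q4) ℂ :=
  fun f g => ∏ j, M1 (f j) (g j)

/-- The state `|EPR⟩^{⊗2}` on one block of four qubits. -/
def eprV : Q4 → ℂ := fun q => if q.1 = q.2.2.1 ∧ q.2.1 = q.2.2.2 then (1 / 2 : ℂ) else 0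

/-- The state `|EPR⟩^{⊗2n}` on `4n` qubits. -/
def eprVn (n : ℕ) : (Fin n → Q4) → ℂ := fun f => ∏ j, eprV (f j)

abbrev P2 := ZMod 2 × ZMod 2

def eps (z : ZMod 2) : ℂ := if z = 0 then 1 else -1

def beta (s a : P2) : ℂ :=
  (if a.2 = a.1 + s.1 then 1 else 0) * (if s.2 = 1 ∧ a.1 = 1 then -1 else 1)

def wXc : Matrix P2 P2 ℂ := fun a c => if c.1 = a.1 + 1 ∧ c.2 = a.2 + 1 then 1 else 0
def wZc : Matrix P2 P2 ℂ := fun a c => if a = c then (if a.1 = a.2 then 1 else -1) else 0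
def wYc : Matrix P2 P2 ℂ := fun a c =>
  if c.1 = a.1 + 1 ∧ c.2 = a.2 + 1 then (if a.1 = a.2 then -1 else 1) else 0

lemma zmod2_cases : ∀ z : ZMod 2, z = 0 ∨ z = 1 := by decide

lemma zm0 : (2 : ZMod 2) = 0 := rfl
lemma zm1 : (0 + 1 : ZMod 2) = 1 := rfl
lemma zm2 : (1 + 1 : ZMod 2) = 0 := rfl
lemma zm3 : (0 + 0 : ZMod 2) = 0 := rfl
lemma zm4 : (1 + 0 : ZMod 2) = 1 := rfl
lemma zmne : (0 : ZMod 2) ≠ 1 := by decide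
lemma zmne' : (1 : ZMod 2) ≠ 0 := by decide


lemma e02 : ((0:ZMod 2) = 2) ↔ True := by decide
lemma e12 : ((1:ZMod 2) = 2) ↔ False := by decide
lemma e20 : ((2:ZMod 2) = 0) ↔ True := by decide
lemma e21 : ((2:ZMod 2) = 1) ↔ False := by decide

lemma sum_zmod2 {M : Type*} [AddCommMonoid M] (f : ZMod 2 → M) : ∑ a, f a = f 0 + f 1 :=
  Fin.sum_univ_two f

lemma sum_P2 (f : P2 → ℂ) : ∑ s, f s = f (0,0) + f (0,1) + f (1,0) + f (1,1) := by
  rw [Fintype.sum_prod_type, sum_zmod2 (fun a => ∑ b, f (a, b)), sum_zmod2 (fun b => f (0, b)),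
    sum_zmod2 (fun b => f (1, b))]
  ring

lemma spec_I (a c : P2) :
    ∑ s,  beta s a * beta s c = 2 * (1 : Matrix P2 P2 ℂ) a c := by
  obtain ⟨a1, a2⟩ := a; obtain ⟨c1, c2⟩ := c
  rw [sum_P2]
  rcases zmod2_cases a1 with rfl | rfl <;> rcases zmod2_cases a2 with rfl | rfl <;> rcases zmod2_cases c1 with rfl | rfl <;> rcases zmod2_cases c2 with rfl | rfl <;>
    norm_num [beta, eps, Matrix.one_apply, Prod.ext_iff, zm0, zm1, zm2, zm3, zm4, zmne, zmne', e02, e12, e20, e21]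

lemma spec_X (a c : P2) :
    ∑ s, eps s.2 * beta s a * beta s c = 2 * wXc a c := by
  obtain ⟨a1, a2⟩ := a; obtain ⟨c1, c2⟩ := c
  rw [sum_P2]
  rcases zmod2_cases a1 with rfl | rfl <;> rcases zmod2_cases a2 with rfl | rfl <;> rcases zmod2_cases c1 with rfl | rfl <;> rcases zmod2_cases c2 with rfl | rfl <;>
    norm_num [beta, eps, wXc, Prod.ext_iff, zm0, zm1, zm2, zm3, zm4, zmne, zmne', e02, e12, e20, e21]

lemma spec_Z (a c : P2) :
    ∑ s, eps s.1 * beta s a * beta s c = 2 * wZc a c := by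
  obtain ⟨a1, a2⟩ := a; obtain ⟨c1, c2⟩ := c
  rw [sum_P2]
  rcases zmod2_cases a1 with rfl | rfl <;> rcases zmod2_cases a2 with rfl | rfl <;> rcases zmod2_cases c1 with rfl | rfl <;> rcases zmod2_cases c2 with rfl | rfl <;>
    norm_num [beta, eps, wZc, Prod.ext_iff, zm0, zm1, zm2, zm3, zm4, zmne, zmne', e02, e12, e20, e21]

lemma spec_Y (a c : P2) :
    ∑ s, (-(eps s.1 * eps s.2)) * beta s a * beta s c = 2 * wYc a c := by
  obtain ⟨a1, a2⟩ := a; obtain ⟨c1, c2⟩ := c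
  rw [sum_P2]
  rcases zmod2_cases a1 with rfl | rfl <;> rcases zmod2_cases a2 with rfl | rfl <;> rcases zmod2_cases c1 with rfl | rfl <;> rcases zmod2_cases c2 with rfl | rfl <;>
    norm_num [beta, eps, wYc, Prod.ext_iff, zm0, zm1, zm2, zm3, zm4, zmne, zmne', e02, e12, e20, e21]

lemma pair_X (a b c d : ZMod 2) : pX a c * pX b d = wXc (a,b) (c,d) := by
  rcases zmod2_cases a with rfl | rfl <;> rcases zmod2_cases b with rfl | rfl <;> rcases zmod2_cases c with rfl | rfl <;> rcases zmod2_cases d with rfl | rfl <;>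
    norm_num [pX, wXc, Prod.ext_iff, Complex.I_mul_I, zm0, zm1, zm2, zm3, zm4, zmne, zmne', e02, e12, e20, e21]

lemma pair_Z (a b c d : ZMod 2) : pZ a c * pZ b d = wZc (a,b) (c,d) := by
  rcases zmod2_cases a with rfl | rfl <;> rcases zmod2_cases b with rfl | rfl <;> rcases zmod2_cases c with rfl | rfl <;> rcases zmod2_cases d with rfl | rfl <;>
    norm_num [pZ, wZc, Prod.ext_iff, Complex.I_mul_I, zm0, zm1, zm2, zm3, zm4, zmne, zmne', e02, e12, e20, e21]

lemma pair_Y (a b c d : ZMod 2) : pY a c * pY b d = wYc (a,b) (c,d) := by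
  rcases zmod2_cases a with rfl | rfl <;> rcases zmod2_cases b with rfl | rfl <;> rcases zmod2_cases c with rfl | rfl <;> rcases zmod2_cases d with rfl | rfl <;>
    norm_num [pY, wYc, Prod.ext_iff, Complex.I_mul_I, zm0, zm1, zm2, zm3, zm4, zmne, zmne', e02, e12, e20, e21]

lemma pair_I (a b c d : ZMod 2) : (1 : Matrix (ZMod 2) (ZMod 2) ℂ) a c * (1 : Matrix (ZMod 2) (ZMod 2) ℂ) b d = (1 : Matrix P2 P2 ℂ) (a,b) (c,d) := by
  rcases zmod2_cases a with rfl | rfl <;> rcases zmod2_cases b with rfl | rfl <;> rcases zmod2_cases c with rfl | rfl <;> rcases zmod2_cases d with rfl | rfl <;>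
    norm_num [Matrix.one_apply, Prod.ext_iff, Complex.I_mul_I, zm0, zm1, zm2, zm3, zm4, zmne, zmne', e02, e12, e20, e21]





/-- regrouping of four qubits into the two pairs (1,3) and (2,4) -/
def rr (p : Q4) : P2 × P2 := ((p.1, p.2.2.1), (p.2.1, p.2.2.2))

def rrinv (u : P2 × P2) : Q4 := (u.1.1, u.2.1, u.1.2, u.2.2)

def req : Q4 ≃ P2 × P2 :=
  ⟨rr, rrinv, by decide, by decide⟩

def bv (t : Q4) : Q4 → ℂ := fun p =>
  (1 / 2) * beta (rr t).1 (rr p).1 * beta (rr t).2 (rr p).2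

def epsR (z : ZMod 2) : ℝ := if z = 0 then 1 else -1

lemma epsR_cast (z : ZMod 2) : ((epsR z : ℝ) : ℂ) = eps z := by
  by_cases h : z = 0 <;> simp [epsR, eps, h]

def lam (t : Q4) : ℝ :=
  1/2 + (1/18) * (epsR (rr t).2.2 + epsR (rr t).1.2 + epsR (rr t).1.2 * epsR (rr t).2.2 +
    epsR (rr t).1.1 + epsR (rr t).2.1 + epsR (rr t).1.1 * epsR (rr t).2.1 +
    epsR (rr t).1.2 * epsR (rr t).2.1 + epsR (rr t).1.1 * epsR (rr t).2.2 +
    (epsR (rr t).1.2 * epsR (rr t).1.1) * (epsR (rr t).2.2 * epsR (rr t).2.1))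

lemma word4_pair {A B C D : Matrix (ZMod 2) (ZMod 2) ℂ} {W1 W2 : Matrix P2 P2 ℂ}
    (h1 : ∀ a b c d, A a c * C b d = W1 (a,b) (c,d))
    (h2 : ∀ a b c d, B a c * D b d = W2 (a,b) (c,d)) (p q : Q4) :
    word4 A B C D p q = W1 (rr p).1 (rr q).1 * W2 (rr p).2 (rr q).2 := by
  simp only [word4, rr, ← h1, ← h2]
  ring

lemma one_pair (p q : Q4) :
    (1 : Matrix Q4 Q4 ℂ) p q
      = (1 : Matrix P2 P2 ℂ) (rr p).1 (rr q).1 * (1 : Matrix P2 P2 ℂ) (rr p).2 (rr q).2 := by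
  have hiff : p = q ↔ (rr p).1 = (rr q).1 ∧ (rr p).2 = (rr q).2 := by
    revert p q; decide
  simp only [Matrix.one_apply]
  by_cases h : p = q
  · rcases hiff.mp h with ⟨h1, h2⟩
    simp [h, h1, h2]
  · rcases Decidable.not_and_iff_or_not.mp (fun hc => h (hiff.mpr hc)) with h1 | h1 <;>
      simp [h, h1]

lemma tensor_spec (E1 E2 : P2 → ℂ) (W1 W2 : Matrix P2 P2 ℂ)
    (h1 : ∀ a c, ∑ s, E1 s * beta s a * beta s c = 2 * W1 a c)
    (h2 : ∀ a c, ∑ s, E2 s * beta s a * beta s c = 2 * W2 a c)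
    (a1 a2 c1 c2 : P2) :
    ∑ u : P2 × P2, (E1 u.1 * E2 u.2) *
        ((1/2) * beta u.1 a1 * beta u.2 a2) * ((1/2) * beta u.1 c1 * beta u.2 c2)
      = W1 a1 c1 * W2 a2 c2 := by
  rw [Fintype.sum_prod_type]
  have step : ∀ s1 : P2, ∑ s2 : P2, (E1 s1 * E2 s2) *
        ((1/2) * beta s1 a1 * beta s2 a2) * ((1/2) * beta s1 c1 * beta s2 c2)
      = (E1 s1 * beta s1 a1 * beta s1 c1) *
          ((1/4) * ∑ s2, E2 s2 * beta s2 a2 * beta s2 c2) := by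
    intro s1
    simp only [Finset.mul_sum]
    exact Finset.sum_congr rfl fun s2 _ => by ring
  rw [Finset.sum_congr rfl fun s1 _ => step s1, ← Finset.sum_mul, h1, h2]
  ring

lemma espec_I : ∀ a c, ∑ s, (fun _ : P2 => (1:ℂ)) s * beta s a * beta s c
    = 2 * (1 : Matrix P2 P2 ℂ) a c := by
  intro a c
  simpa using spec_I a c

lemma M1_spec (p q : Q4) : M1 p q = ∑ t, (lam t : ℂ) * bv t p * bv t q := by
  have reindex : ∑ t, (lam t : ℂ) * bv t p * bv t q
      = ∑ u : P2 × P2,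
          (((1:ℝ)/2 + (1/18) * (epsR u.2.2 + epsR u.1.2 + epsR u.1.2 * epsR u.2.2 +
            epsR u.1.1 + epsR u.2.1 + epsR u.1.1 * epsR u.2.1 +
            epsR u.1.2 * epsR u.2.1 + epsR u.1.1 * epsR u.2.2 +
            (epsR u.1.2 * epsR u.1.1) * (epsR u.2.2 * epsR u.2.1)) : ℝ) : ℂ) *
            ((1/2) * beta u.1 (rr p).1 * beta u.2 (rr p).2) *
            ((1/2) * beta u.1 (rr q).1 * beta u.2 (rr q).2) := by
    rw [← Equiv.sum_comp req]
    exact Finset.sum_congr rfl fun t _ => by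
      simp only [lam, bv, req, Equiv.coe_fn_mk]
  rw [reindex]
  have expand : ∀ u : P2 × P2,
      (((1:ℝ)/2 + (1/18) * (epsR u.2.2 + epsR u.1.2 + epsR u.1.2 * epsR u.2.2 +
            epsR u.1.1 + epsR u.2.1 + epsR u.1.1 * epsR u.2.1 +
            epsR u.1.2 * epsR u.2.1 + epsR u.1.1 * epsR u.2.2 +
            (epsR u.1.2 * epsR u.1.1) * (epsR u.2.2 * epsR u.2.1)) : ℝ) : ℂ) *
            ((1/2) * beta u.1 (rr p).1 * beta u.2 (rr p).2) *
            ((1/2) * beta u.1 (rr q).1 * beta u.2 (rr q).2)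
      = (1/2 : ℂ) * ((1 * 1) * ((1/2) * beta u.1 (rr p).1 * beta u.2 (rr p).2) *
            ((1/2) * beta u.1 (rr q).1 * beta u.2 (rr q).2))
        + (1/18 : ℂ) *
          ( (1 * eps u.2.2) * ((1/2) * beta u.1 (rr p).1 * beta u.2 (rr p).2) *
              ((1/2) * beta u.1 (rr q).1 * beta u.2 (rr q).2)
          + (eps u.1.2 * 1) * ((1/2) * beta u.1 (rr p).1 * beta u.2 (rr p).2) *
              ((1/2) * beta u.1 (rr q).1 * beta u.2 (rr q).2)
          + (eps u.1.2 * eps u.2.2) * ((1/2) * beta u.1 (rr p).1 * beta u.2 (rr p).2) *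
              ((1/2) * beta u.1 (rr q).1 * beta u.2 (rr q).2)
          + (eps u.1.1 * 1) * ((1/2) * beta u.1 (rr p).1 * beta u.2 (rr p).2) *
              ((1/2) * beta u.1 (rr q).1 * beta u.2 (rr q).2)
          + (1 * eps u.2.1) * ((1/2) * beta u.1 (rr p).1 * beta u.2 (rr p).2) *
              ((1/2) * beta u.1 (rr q).1 * beta u.2 (rr q).2)
          + (eps u.1.1 * eps u.2.1) * ((1/2) * beta u.1 (rr p).1 * beta u.2 (rr p).2) *
              ((1/2) * beta u.1 (rr q).1 * beta u.2 (rr q).2)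
          + (eps u.1.2 * eps u.2.1) * ((1/2) * beta u.1 (rr p).1 * beta u.2 (rr p).2) *
              ((1/2) * beta u.1 (rr q).1 * beta u.2 (rr q).2)
          + (eps u.1.1 * eps u.2.2) * ((1/2) * beta u.1 (rr p).1 * beta u.2 (rr p).2) *
              ((1/2) * beta u.1 (rr q).1 * beta u.2 (rr q).2)
          + ((-(eps u.1.1 * eps u.1.2)) * (-(eps u.2.1 * eps u.2.2))) *
              ((1/2) * beta u.1 (rr p).1 * beta u.2 (rr p).2) *
              ((1/2) * beta u.1 (rr q).1 * beta u.2 (rr q).2)) := by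
    intro u
    push_cast
    rw [← epsR_cast u.1.1, ← epsR_cast u.1.2, ← epsR_cast u.2.1, ← epsR_cast u.2.2]
    push_cast
    ring
  rw [Finset.sum_congr rfl fun u _ => expand u]
  rw [Finset.sum_add_distrib, ← Finset.mul_sum, ← Finset.mul_sum]
  simp only [Finset.sum_add_distrib]
  rw [tensor_spec _ _ _ _ espec_I espec_I,
      tensor_spec _ _ _ _ espec_I spec_X,
      tensor_spec _ _ _ _ spec_X espec_I,
      tensor_spec _ _ _ _ spec_X spec_X,
      tensor_spec _ _ _ _ spec_Z espec_I,
      tensor_spec _ _ _ _ espec_I spec_Z,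
      tensor_spec _ _ _ _ spec_Z spec_Z,
      tensor_spec _ _ _ _ spec_X spec_Z,
      tensor_spec _ _ _ _ spec_Z spec_X,
      tensor_spec _ _ _ _ spec_Y spec_Y]
  rw [← word4_pair pair_I pair_X p q, ← word4_pair pair_X pair_I p q,
      ← word4_pair pair_X pair_X p q, ← word4_pair pair_Z pair_I p q,
      ← word4_pair pair_I pair_Z p q, ← word4_pair pair_Z pair_Z p q,
      ← word4_pair pair_X pair_Z p q, ← word4_pair pair_Z pair_X p q,
      ← word4_pair pair_Y pair_Y p q, ← one_pair p q]
  simp only [M1, Matrix.add_apply, Matrix.smul_apply, smul_eq_mul]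




-- appended to part2
lemma lam_zero : lam 0 = 1 := by norm_num [lam, rr, epsR]

lemma lam_nonneg (t : Q4) : 0 ≤ lam t := by
  obtain ⟨a, b, c, d⟩ := t
  rcases zmod2_cases a with rfl | rfl <;> rcases zmod2_cases b with rfl | rfl <;>
    rcases zmod2_cases c with rfl | rfl <;> rcases zmod2_cases d with rfl | rfl <;>
    norm_num [lam, rr, epsR, zmne, zmne']

lemma lam_le_one (t : Q4) : lam t ≤ 1 := by
  obtain ⟨a, b, c, d⟩ := t
  rcases zmod2_cases a with rfl | rfl <;> rcases zmod2_cases b with rfl | rfl <;>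
    rcases zmod2_cases c with rfl | rfl <;> rcases zmod2_cases d with rfl | rfl <;>
    norm_num [lam, rr, epsR, zmne, zmne']

lemma lam_ne (t : Q4) (ht : t ≠ 0) : lam t ≤ 5/9 := by
  obtain ⟨a, b, c, d⟩ := t
  rcases zmod2_cases a with rfl | rfl <;> rcases zmod2_cases b with rfl | rfl <;>
    rcases zmod2_cases c with rfl | rfl <;> rcases zmod2_cases d with rfl | rfl <;>
    first
      | exact absurd rfl ht
      | norm_num [lam, rr, epsR, zmne, zmne']

lemma bv_conj (t p : Q4) : star (bv t p) = bv t p := by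
  simp only [bv, beta]
  split_ifs <;> simp <;> norm_num

lemma bv_complete (p q : Q4) : ∑ t, bv t p * bv t q = if p = q then 1 else 0 := by
  have : ∑ t, bv t p * bv t q
      = ∑ u : P2 × P2, ((fun _ : P2 => (1:ℂ)) u.1 * (fun _ : P2 => (1:ℂ)) u.2) *
          ((1/2) * beta u.1 (rr p).1 * beta u.2 (rr p).2) *
          ((1/2) * beta u.1 (rr q).1 * beta u.2 (rr q).2) := by
    rw [← Equiv.sum_comp req]
    exact Finset.sum_congr rfl fun t _ => by
      simp only [bv, req, Equiv.coe_fn_mk]; ring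
  rw [this, tensor_spec _ _ _ _ espec_I espec_I, ← one_pair p q, Matrix.one_apply]

lemma bv_zero : bv 0 = eprV := by
  funext p
  obtain ⟨a, b, c, d⟩ := p
  rcases zmod2_cases a with rfl | rfl <;> rcases zmod2_cases b with rfl | rfl <;>
    rcases zmod2_cases c with rfl | rfl <;> rcases zmod2_cases d with rfl | rfl <;>
    norm_num [bv, beta, eprV, rr, zmne, zmne', zm3]

def Bn (n : ℕ) (s : Fin n → Q4) : (Fin n → Q4) → ℂ := fun f => ∏ j, bv (s j) (f j)

lemma Bn_conj (n : ℕ) (s f : Fin n → Q4) : star (Bn n s f) = Bn n s f := by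
  simp only [Bn, star_prod]
  exact Finset.prod_congr rfl fun j _ => bv_conj _ _

lemma Mn_spec (n : ℕ) (f g : Fin n → Q4) :
    Mn n f g = ∑ s : Fin n → Q4, (∏ j, (lam (s j) : ℂ)) * Bn n s f * Bn n s g := by
  have h1 : Mn n f g = ∏ j, ∑ t, (lam t : ℂ) * bv t (f j) * bv t (g j) :=
    Finset.prod_congr rfl fun j _ => M1_spec (f j) (g j)
  rw [h1, Finset.prod_univ_sum, Fintype.piFinset_univ]
  refine Finset.sum_congr rfl fun s _ => ?_
  rw [Bn, Bn, ← Finset.prod_mul_distrib, ← Finset.prod_mul_distrib]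

lemma Bn_complete (n : ℕ) (f g : Fin n → Q4) :
    ∑ s : Fin n → Q4, Bn n s f * Bn n s g = if f = g then 1 else 0 := by
  have h1 : ∀ s : Fin n → Q4, Bn n s f * Bn n s g = ∏ j, bv (s j) (f j) * bv (s j) (g j) :=
    fun s => (Finset.prod_mul_distrib).symm
  rw [Finset.sum_congr rfl fun s _ => h1 s, ← Fintype.piFinset_univ,
    ← Finset.prod_univ_sum (fun _ => Finset.univ) (fun j t => bv t (f j) * bv t (g j))]
  have h2 : ∀ j : Fin n, ∑ t, bv t (f j) * bv t (g j) = if f j = g j then 1 else 0 :=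
    fun j => bv_complete (f j) (g j)
  rw [Finset.prod_congr rfl fun j _ => h2 j, Finset.prod_boole]
  simp [funext_iff]



/-- If a density matrix `ρ` on `(ℂ²)^{⊗4n}` satisfies `Tr[M_n ρ] ≥ 1 - δ`,
then `⟨EPR|^{⊗2n} ρ |EPR⟩^{⊗2n} ≥ 1 - (9/4)δ`. -/
theorem stmt_7 (n : ℕ) (ρ : Matrix (Fin n → Q4) (Fin n → Q4) ℂ)
    (hρ : ρ.PosSemidef) (htr : ρ.trace = 1) (δ : ℝ) (hδ : 0 ≤ δ)
    (h : 1 - δ ≤ ((Mn n * ρ).trace).re) :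
    1 - (9 / 4) * δ ≤ (star (eprVn n) ⬝ᵥ (ρ *ᵥ eprVn n)).re := by
  classical
  set q : (Fin n → Q4) → ℂ := fun s => star (Bn n s) ⬝ᵥ ρ *ᵥ Bn n s with hq
  -- expansion of q as a double sum
  have qs_expand : ∀ s, q s = ∑ g, ∑ f, (Bn n s g * Bn n s f) * ρ g f := by
    intro s
    simp only [hq, dotProduct, Matrix.mulVec, dotProduct, Pi.star_apply, Bn_conj,
      Finset.mul_sum]
    exact Finset.sum_congr rfl fun g _ => Finset.sum_congr rfl fun f _ => by ring
  -- positivity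
  have hq0 : ∀ s, 0 ≤ (q s).re := by
    intro s
    have h1 : (0 : ℂ) ≤ q s := hρ.dotProduct_mulVec_nonneg (Bn n s)
    exact (Complex.le_def.mp h1).1
  -- sum of q's is 1
  have hqsum : ∑ s : Fin n → Q4, (q s).re = 1 := by
    have h1 : ∑ s : Fin n → Q4, q s = 1 := by
      rw [Finset.sum_congr rfl fun s _ => qs_expand s]
      rw [Finset.sum_comm]
      have h2 : ∀ g, ∑ s : Fin n → Q4, ∑ f, (Bn n s g * Bn n s f) * ρ g f
          = ∑ f, (if g = f then 1 else 0) * ρ g f := by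
        intro g
        rw [Finset.sum_comm]
        refine Finset.sum_congr rfl fun f _ => ?_
        rw [← Finset.sum_mul, Bn_complete]
      rw [Finset.sum_congr rfl fun g _ => h2 g]
      simp only [ite_mul, one_mul, zero_mul, Finset.sum_ite_eq, Finset.mem_univ, if_true]
      exact htr
    have := congrArg Complex.re h1
    rwa [Complex.re_sum] at this
  -- trace formula
  have htrace : ((Mn n * ρ).trace) = ∑ s : Fin n → Q4, (∏ j, (lam (s j) : ℂ)) * q s := by
    have h1 : (Mn n * ρ).trace = ∑ f, ∑ g, Mn n f g * ρ g f := by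
      simp only [Matrix.trace, Matrix.diag, Matrix.mul_apply]
    rw [h1]
    have h2 : ∀ f, ∑ g, Mn n f g * ρ g f
        = ∑ s : Fin n → Q4, ∑ g, ((∏ j, (lam (s j) : ℂ)) * Bn n s f * Bn n s g) * ρ g f := by
      intro f
      rw [Finset.sum_comm]
      refine Finset.sum_congr rfl fun g _ => ?_
      rw [Mn_spec, Finset.sum_mul]
    rw [Finset.sum_congr rfl fun f _ => h2 f, Finset.sum_comm]
    refine Finset.sum_congr rfl fun s _ => ?_
    rw [qs_expand s, Finset.mul_sum, Finset.sum_comm]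
    refine Finset.sum_congr rfl fun f _ => ?_
    rw [Finset.mul_sum]
    exact Finset.sum_congr rfl fun g _ => by ring
  have htrace_re : ((Mn n * ρ).trace).re = ∑ s : Fin n → Q4, (∏ j, lam (s j)) * (q s).re := by
    rw [htrace, Complex.re_sum]
    refine Finset.sum_congr rfl fun s _ => ?_
    rw [← Complex.ofReal_prod, Complex.re_ofReal_mul]
  -- target equals q at the top index
  have htarget : star (eprVn n) ⬝ᵥ (ρ *ᵥ eprVn n) = q (fun _ => 0) := by
    have : eprVn n = Bn n (fun _ => 0) := by
      funext f
      exact Finset.prod_congr rfl fun j _ => by rw [← bv_zero]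
    rw [this, hq]
  rw [htarget]
  -- real arithmetic
  set Λ : (Fin n → Q4) → ℝ := fun s => ∏ j, lam (s j) with hΛ
  set x : (Fin n → Q4) → ℝ := fun s => (q s).re with hx
  set top : Fin n → Q4 := fun _ => 0 with htop
  have hΛtop : Λ top = 1 := by
    simp [hΛ, htop, lam_zero]
  have hΛ1 : ∀ s, Λ s ≤ 1 :=
    fun s => Finset.prod_le_one (fun j _ => lam_nonneg _) (fun j _ => lam_le_one _)
  have hΛ0 : ∀ s, 0 ≤ Λ s := fun s => Finset.prod_nonneg fun j _ => lam_nonneg _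
  have hΛ59 : ∀ s, s ≠ top → Λ s ≤ 5/9 := by
    intro s hs
    obtain ⟨j, hj⟩ : ∃ j, s j ≠ 0 := by
      by_contra hc
      push_neg at hc
      exact hs (funext fun j => hc j)
    have h1 : Λ s = lam (s j) * ∏ k ∈ Finset.univ.erase j, lam (s k) :=
      (Finset.mul_prod_erase Finset.univ _ (Finset.mem_univ j)).symm
    have h2 : ∏ k ∈ Finset.univ.erase j, lam (s k) ≤ 1 :=
      Finset.prod_le_one (fun k _ => lam_nonneg _) (fun k _ => lam_le_one _)
    have h3 : (0:ℝ) ≤ ∏ k ∈ Finset.univ.erase j, lam (s k) :=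
      Finset.prod_nonneg fun k _ => lam_nonneg _
    have h4 := lam_ne (s j) hj
    calc Λ s = lam (s j) * ∏ k ∈ Finset.univ.erase j, lam (s k) := h1
      _ ≤ (5/9) * 1 := mul_le_mul h4 h2 h3 (by norm_num)
      _ = 5/9 := by ring
  -- the main estimate
  have hsplit : ∑ s : Fin n → Q4, Λ s * x s
      = Λ top * x top + ∑ s ∈ Finset.univ.erase top, Λ s * x s :=
    (Finset.add_sum_erase Finset.univ _ (Finset.mem_univ top)).symm
  have hxsplit : ∑ s ∈ Finset.univ.erase top, x s = 1 - x top := by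
    have := (Finset.add_sum_erase Finset.univ x (Finset.mem_univ top)).symm
    rw [hqsum] at this
    linarith
  have hb : ∑ s ∈ Finset.univ.erase top, Λ s * x s
      ≤ ∑ s ∈ Finset.univ.erase top, (5/9) * x s := by
    refine Finset.sum_le_sum fun s hs => ?_
    exact mul_le_mul_of_nonneg_right (hΛ59 s (Finset.mem_erase.mp hs).1) (hq0 s)
  have hkey : 1 - δ ≤ x top + (5/9) * (1 - x top) := by
    have e1 : ((Mn n * ρ).trace).re = ∑ s : Fin n → Q4, Λ s * x s := htrace_re
    have e2 : ∑ s ∈ Finset.univ.erase top, (5/9) * x s = (5/9) * (1 - x top) := by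
      rw [← Finset.mul_sum, hxsplit]
    calc (1:ℝ) - δ ≤ ∑ s : Fin n → Q4, Λ s * x s := by rw [← e1]; exact h
      _ = Λ top * x top + ∑ s ∈ Finset.univ.erase top, Λ s * x s := hsplit
      _ ≤ 1 * x top + (5/9) * (1 - x top) := by
          rw [hΛtop]
          exact add_le_add_right (le_trans hb (le_of_eq e2)) _
      _ = x top + (5/9) * (1 - x top) := by ring
  have : (q top).re = x top := rfl
  rw [this]
  linarith


end
end

section
/- Single-round commutation on different qubits: Under the same hypotheses as the anticommutation derivation (the nine 1-9ε consistency inequalities for the Magic Square observables), ‖(X₁Z₂ - Z₂X₁)ψ‖ ≤ C√ε for some universal constant C. -/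
section aux
variable {H : Type} [NormedAddCommGroup H] [InnerProductSpace ℂ H]

private lemma sa_inner [CompleteSpace H] {T : H →L[ℂ] H} (hT : IsSelfAdjoint T) (x y : H) :
    (inner ℂ (T x) y : ℂ) = inner ℂ x (T y) := by
  conv_lhs => rw [← hT.adjoint_eq]
  exact ContinuousLinearMap.adjoint_inner_left T y x

private lemma sa_norm [CompleteSpace H] {T : H →L[ℂ] H} (hT : IsSelfAdjoint T)
    (h1 : T * T = 1) (v : H) : ‖T v‖ = ‖v‖ := by
  have h : (inner ℂ (T v) (T v) : ℂ) = inner ℂ v v := by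
    rw [sa_inner hT, ← ContinuousLinearMap.mul_apply, h1, ContinuousLinearMap.one_apply]
  rw [norm_eq_sqrt_re_inner (𝕜 := ℂ) (T v), norm_eq_sqrt_re_inner (𝕜 := ℂ) v, h]

private lemma close_of_inner (u v : H) (δ : ℝ) (hu : ‖u‖ = 1) (hv : ‖v‖ = 1)
    (h : 1 - δ ≤ (inner ℂ u v : ℂ).re) : ‖u - v‖ ≤ Real.sqrt (2 * δ) := by
  have h2 : ‖u - v‖ ^ 2 ≤ 2 * δ := by
    have := norm_sub_sq (𝕜 := ℂ) u v
    simp only [RCLike.re_to_complex] at this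
    rw [this, hu, hv]; nlinarith
  calc ‖u - v‖ = Real.sqrt (‖u - v‖ ^ 2) := (Real.sqrt_sq (norm_nonneg _)).symm
    _ ≤ Real.sqrt (2 * δ) := Real.sqrt_le_sqrt h2

end aux

/-- single-round commutation on different qubits.  There is a universal
constant `C > 0` such that the following holds.  Let `X₁,Z₁,X₂,Z₂,W₁,W₂` be Hermitian
unitaries on Alice's side and `X₃,Z₃,X₄,Z₄,W₃,W₄` Hermitian unitaries on Bob's side
(modelled as operators on the joint Hilbert space, every Alice operator commuting with every
Bob operator), and let `ψ` be a unit vector.  If the nine Magic Square consistency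
inequalities hold up to `1 - 9ε`, then `‖(X₁Z₂ - Z₂X₁)ψ‖ ≤ C√ε`. -/
theorem stmt_14 :
    ∃ C : ℝ, 0 < C ∧
      ∀ (H : Type) (_ : NormedAddCommGroup H), ∀ (_ : InnerProductSpace ℂ H)
        (_ : CompleteSpace H)
        (X₁ Z₁ X₂ Z₂ W₁ W₂ X₃ Z₃ X₄ Z₄ W₃ W₄ : H →L[ℂ] H)
        (ψ : H) (ε : ℝ), 0 ≤ ε → ‖ψ‖ = 1 →
        (∀ T ∈ [X₁, Z₁, X₂, Z₂, W₁, W₂, X₃, Z₃, X₄, Z₄, W₃, W₄],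
          IsSelfAdjoint T ∧ T * T = 1) →
        (∀ T ∈ [X₁, Z₁, X₂, Z₂, W₁, W₂], ∀ U ∈ [X₃, Z₃, X₄, Z₄, W₃, W₄],
          Commute T U) →
        1 - 9 * ε ≤ (inner ℂ ψ ((Z₁ * Z₃) ψ) : ℂ).re →
        1 - 9 * ε ≤ (inner ℂ ψ ((Z₂ * Z₄) ψ) : ℂ).re →
        1 - 9 * ε ≤ (inner ℂ ψ ((Z₁ * Z₂ * W₃) ψ) : ℂ).re →
        1 - 9 * ε ≤ (inner ℂ ψ ((X₂ * X₄) ψ) : ℂ).re →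
        1 - 9 * ε ≤ (inner ℂ ψ ((X₁ * X₃) ψ) : ℂ).re →
        1 - 9 * ε ≤ (inner ℂ ψ ((X₁ * X₂ * W₄) ψ) : ℂ).re →
        1 - 9 * ε ≤ -(inner ℂ ψ ((W₁ * Z₃ * X₄) ψ) : ℂ).re →
        1 - 9 * ε ≤ -(inner ℂ ψ ((W₂ * Z₄ * X₃) ψ) : ℂ).re →
        1 - 9 * ε ≤ -(inner ℂ ψ ((W₁ * W₂ * W₃ * W₄) ψ) : ℂ).re →
        ‖(X₁ * Z₂ - Z₂ * X₁) ψ‖ ≤ C * Real.sqrt ε := by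
  refine ⟨6 * Real.sqrt 18, by positivity, ?_⟩
  intro H _ _ _ X₁ Z₁ X₂ Z₂ W₁ W₂ X₃ Z₃ X₄ Z₄ W₃ W₄ ψ ε hε hψ hsa hcomm
  intro _ h2 _ _ h5 _ _ h8 _
  obtain ⟨hX₁, uX₁⟩ := hsa X₁ (by simp)
  obtain ⟨hZ₂, uZ₂⟩ := hsa Z₂ (by simp)
  obtain ⟨hW₂, uW₂⟩ := hsa W₂ (by simp)
  obtain ⟨hX₃, uX₃⟩ := hsa X₃ (by simp)
  obtain ⟨hZ₄, uZ₄⟩ := hsa Z₄ (by simp)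
  have cX₁Z₄ : Commute X₁ Z₄ := hcomm X₁ (by simp) Z₄ (by simp)
  have cZ₂X₃ : Commute Z₂ X₃ := hcomm Z₂ (by simp) X₃ (by simp)
  have cW₂Z₄ : Commute W₂ Z₄ := hcomm W₂ (by simp) Z₄ (by simp)
  have cW₂X₃ : Commute W₂ X₃ := hcomm W₂ (by simp) X₃ (by simp)
  set s : ℝ := Real.sqrt (2 * (9 * ε)) with hs
  have nX₁ := sa_norm hX₁ uX₁
  have nZ₂ := sa_norm hZ₂ uZ₂
  have nW₂ := sa_norm hW₂ uW₂
  have nX₃ := sa_norm hX₃ uX₃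
  have nZ₄ := sa_norm hZ₄ uZ₄
  -- d1 : Z₂ψ ≈ Z₄ψ
  have d1 : ‖Z₂ ψ - Z₄ ψ‖ ≤ s := by
    apply close_of_inner _ _ _ (by rw [nZ₂, hψ]) (by rw [nZ₄, hψ])
    rw [sa_inner hZ₂]
    exact h2
  -- d2 : X₁ψ ≈ X₃ψ
  have d2 : ‖X₁ ψ - X₃ ψ‖ ≤ s := by
    apply close_of_inner _ _ _ (by rw [nX₁, hψ]) (by rw [nX₃, hψ])
    rw [sa_inner hX₁]
    exact h5
  -- d3 : -(W₂ψ) ≈ Z₄X₃ψ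
  have d3 : ‖-(W₂ ψ) - Z₄ (X₃ ψ)‖ ≤ s := by
    apply close_of_inner _ _ _ (by rw [norm_neg, nW₂, hψ]) (by rw [nZ₄, nX₃, hψ])
    rw [inner_neg_left, Complex.neg_re, sa_inner hW₂]
    exact h8
  -- d4 : X₃Z₄ψ ≈ -(W₂ψ)
  have d4 : ‖X₃ (Z₄ ψ) - -(W₂ ψ)‖ ≤ s := by
    apply close_of_inner _ _ _ (by rw [nX₃, nZ₄, hψ]) (by rw [norm_neg, nW₂, hψ])
    rw [inner_neg_right, Complex.neg_re, sa_inner hX₃, sa_inner hZ₄]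
    have e : W₂ * Z₄ * X₃ = Z₄ * (X₃ * W₂) := by
      rw [mul_assoc, (cW₂Z₄.mul_right cW₂X₃).eq, mul_assoc]
    rw [e] at h8
    exact h8
  -- d5 : X₃Z₄ψ ≈ X₃Z₂ψ
  have d5 : ‖X₃ (Z₄ ψ) - X₃ (Z₂ ψ)‖ ≤ s := by
    rw [← map_sub, nX₃, ← norm_neg]
    simpa using d1
  -- d6 : Z₂X₃ψ ≈ Z₂X₁ψ
  have d6 : ‖Z₂ (X₃ ψ) - Z₂ (X₁ ψ)‖ ≤ s := by
    rw [← map_sub, nZ₂, ← norm_neg]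
    simpa using d2
  -- d0 : X₁Z₂ψ ≈ X₁Z₄ψ
  have d0 : ‖X₁ (Z₂ ψ) - X₁ (Z₄ ψ)‖ ≤ s := by rw [← map_sub, nX₁]; exact d1
  -- d2' : Z₄X₁ψ ≈ Z₄X₃ψ
  have d2' : ‖Z₄ (X₁ ψ) - Z₄ (X₃ ψ)‖ ≤ s := by rw [← map_sub, nZ₄]; exact d2
  have e1 : X₁ (Z₄ ψ) = Z₄ (X₁ ψ) := by
    simpa [ContinuousLinearMap.mul_apply] using DFunLike.congr_fun cX₁Z₄.eq ψ
  have e2 : X₃ (Z₂ ψ) = Z₂ (X₃ ψ) := by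
    simpa [ContinuousLinearMap.mul_apply] using DFunLike.congr_fun cZ₂X₃.eq.symm ψ
  have tri : ∀ a b c d e f g : H,
      ‖a - g‖ ≤ ‖a - b‖ + ‖b - c‖ + ‖c - d‖ + ‖d - e‖ + ‖e - f‖ + ‖f - g‖ := by
    intro a b c d e f g
    simp only [← dist_eq_norm]
    have t1 := dist_triangle a d g
    have t2 := dist_triangle4 a b c d
    have t3 := dist_triangle4 d e f g
    linarith
  have chain : ‖X₁ (Z₂ ψ) - Z₂ (X₁ ψ)‖ ≤ 6 * s := by
    have d3' : ‖Z₄ (X₃ ψ) - -(W₂ ψ)‖ ≤ s := by rw [norm_sub_rev]; exact d3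
    have d4' : ‖-(W₂ ψ) - X₃ (Z₄ ψ)‖ ≤ s := by rw [norm_sub_rev]; exact d4
    have t := tri (X₁ (Z₂ ψ)) (X₁ (Z₄ ψ)) (Z₄ (X₃ ψ)) (-(W₂ ψ)) (X₃ (Z₄ ψ)) (X₃ (Z₂ ψ))
      (Z₂ (X₁ ψ))
    rw [← e1] at d2'
    rw [← e2] at d6
    linarith
  calc ‖(X₁ * Z₂ - Z₂ * X₁) ψ‖ = ‖X₁ (Z₂ ψ) - Z₂ (X₁ ψ)‖ := by
        simp [ContinuousLinearMap.sub_apply, ContinuousLinearMap.mul_apply]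
    _ ≤ 6 * s := chain
    _ = 6 * Real.sqrt 18 * Real.sqrt ε := by
        rw [hs, show (2 : ℝ) * (9 * ε) = 18 * ε by ring, Real.sqrt_mul (by norm_num), mul_assoc]
end
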